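/- If Ḡ is weakly connected and compact, then the algebra 𝔸 of eventually flat functions (extended continuously to Ḡ) is uniformly dense in C(Ḡ), the continuous real-valued functions on Ḡ. -/

import Mathlib

open UniformSpace Filter Topology
open scoped ENNReal

noncomputable section

/-- A locally finite edge-weighted (resistance) graph. -/
structure WGraph (V : Type*) where
  Adj : V → V → Prop
  symm : ∀ u v, Adj u v → Adj v u
  loopless : ∀ v, ¬ Adj v v
  R : V → V → ℝ
  Rsymm : ∀ u v, R u v = R v u
  Rpos : ∀ u v, Adj u v → 0 < R u v
  locFin : ∀ v, {u | Adj u v}.Finite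

namespace WGraph

variable {V : Type*} (G : WGraph V)

/-- The set of edges, as unordered pairs of vertices. -/
def edgeSet : Set (Sym2 V) := {e | ∃ u v, G.Adj u v ∧ e = s(u, v)}

/-- The set of total lengths of finite paths joining `u` to `v`. -/
def pathLengths (u v : V) : Set ℝ :=
  {L | ∃ (n : ℕ) (p : ℕ → V), p 0 = u ∧ p n = v ∧
        (∀ k < n, G.Adj (p k) (p (k + 1))) ∧
        L = ∑ k ∈ Finset.range n, G.R (p k) (p (k + 1))}

/-- `G` is connected: any two vertices are joined by a finite path. -/
def Connected : Prop := ∀ u v : V, (G.pathLengths u v).Nonempty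

/-- The metric on the vertex set is the minimal resistance path metric of `G`. -/
def IsPathMetric [MetricSpace V] : Prop :=
  ∀ u v : V, dist u v = sInf (G.pathLengths u v)

/-- Eventually flat functions: the values differ across only finitely many edges. -/
def EventuallyFlat (φ : V → ℝ) : Prop :=
  {p : V × V | G.Adj p.1 p.2 ∧ φ p.1 ≠ φ p.2}.Finite

open Classical in
/-- The conductance: the reciprocal resistance on edges, `0` off edges. -/
def cond (u v : V) : ℝ := if G.Adj u v then (G.R u v)⁻¹ else 0

/-- `f` is harmonic at `v`: its value is the conductance-weighted average of the
values at the adjacent vertices. -/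
def HarmonicAt (f : V → ℝ) (v : V) : Prop :=
  f v = (∑ u ∈ (G.locFin v).toFinset, G.cond u v)⁻¹ *
          ∑ u ∈ (G.locFin v).toFinset, G.cond u v * f u

/-- The weighted `ℓ²(μ)` inner product. -/
def winner (μ : V → ℝ) (f g : V → ℝ) : ℝ := ∑' v, f v * g v * μ v

/-- The bilinear (energy) form associated to conductances `C`. -/
def Bform (C : V → V → ℝ) (f g : V → ℝ) : ℝ :=
  (1 / 2) * ∑' p : V × V, C p.1 p.2 * (f p.1 - f p.2) * (g p.1 - g p.2)

/-- The formal Laplacian `Δ_μ`. -/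
def lap (C : V → V → ℝ) (μ : V → ℝ) (f : V → ℝ) (v : V) : ℝ :=
  (1 / μ v) * ∑' u, C u v * (f v - f u)

/-- The (possibly infinite) energy of `f`. -/
def energy (C : V → V → ℝ) (f : V → ℝ) : ℝ≥0∞ :=
  (1 / 2) * ∑' p : V × V, ENNReal.ofReal (C p.1 p.2 * (f p.1 - f p.2) ^ 2)

variable [MetricSpace V]

/-- A path in the completion `Ḡ` joining `x` and `y`: a two-sided sequence of
vertices (stationary steps are allowed, so this encodes finite paths, rays and
double rays) converging to `x` and `y` at its two ends. -/
structure CPath (x y : Completion V) where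
  p : ℤ → V
  step : ∀ k, p k = p (k + 1) ∨ G.Adj (p k) (p (k + 1))
  tendsto_left : Tendsto (fun n : ℕ => ((p (-(n : ℤ)) : V) : Completion V)) atTop (nhds x)
  tendsto_right : Tendsto (fun n : ℕ => ((p (n : ℤ) : V) : Completion V)) atTop (nhds y)

end WGraph

/-- The path `γ` uses (contains) the edge `e`. -/
def WGraph.CPath.uses {V : Type*} [MetricSpace V] {G : WGraph V}
    {x y : Completion V} (γ : G.CPath x y) (e : Sym2 V) : Prop :=
  ∃ k : ℤ, γ.p k ≠ γ.p (k + 1) ∧ e = s(γ.p k, γ.p (k + 1))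

namespace WGraph

variable {V : Type*} (G : WGraph V) [MetricSpace V]

/-- The completion `Ḡ` is weakly connected: any two distinct points admit a
finite set of edges met by every path joining them. -/
def WeaklyConnected : Prop :=
  ∀ x y : Completion V, x ≠ y →
    ∃ W : Set (Sym2 V), W.Finite ∧ W ⊆ G.edgeSet ∧
      ∀ γ : G.CPath x y, ∃ e ∈ W, γ.uses e

end WGraph

set_option linter.unusedSectionVars false

namespace WGraph

variable {V : Type*} (G : WGraph V)

/-- A finite path from `u` to `v` avoiding the edge set `W`. -/
def AvoidPath (W : Set (Sym2 V)) (u v : V) : Prop :=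
  ∃ (n : ℕ) (p : ℕ → V), p 0 = u ∧ p n = v ∧
    ∀ k < n, G.Adj (p k) (p (k + 1)) ∧ s(p k, p (k + 1)) ∉ W

lemma avoidPath_refl (W : Set (Sym2 V)) (u : V) : G.AvoidPath W u u :=
  ⟨0, fun _ => u, rfl, rfl, by omega⟩

lemma avoidPath_symm {W : Set (Sym2 V)} {u v : V} (h : G.AvoidPath W u v) :
    G.AvoidPath W v u := by
  obtain ⟨n, p, h0, hn, hs⟩ := h
  refine ⟨n, fun k => p (n - k), by simpa using hn, by simpa using h0, ?_⟩
  intro k hk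
  have h1 : n - k = (n - (k + 1)) + 1 := by omega
  have h2 := hs (n - (k + 1)) (by omega)
  refine ⟨?_, ?_⟩
  · show G.Adj (p (n - k)) (p (n - (k + 1)))
    rw [h1]; exact G.symm _ _ h2.1
  · show s(p (n - k), p (n - (k + 1))) ∉ W
    rw [h1, Sym2.eq_swap]; exact h2.2

lemma avoidPath_trans {W : Set (Sym2 V)} {u v w : V} (h1 : G.AvoidPath W u v)
    (h2 : G.AvoidPath W v w) : G.AvoidPath W u w := by
  obtain ⟨n, p, hp0, hpn, hps⟩ := h1
  obtain ⟨m, q, hq0, hqm, hqs⟩ := h2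
  refine ⟨n + m, fun k => if k < n then p k else q (k - n), ?_, ?_, ?_⟩
  · by_cases h : 0 < n
    · simp [h, hp0]
    · have hn0 : n = 0 := by omega
      subst hn0
      simp only [lt_irrefl, if_neg (lt_irrefl 0)]
      rw [Nat.sub_zero, hq0, ← hpn, hp0]
      simp
  · have : ¬ (n + m < n) := by omega
    simp only [this, if_false]
    rw [show n + m - n = m by omega, hqm]
  · intro k hk
    by_cases hk1 : k + 1 < n
    · have hk2 : k < n := by omega
      simp only [hk1, hk2, if_true]
      exact hps k hk2
    · by_cases hk2 : k < n
      · have hkn : k + 1 = n := by omega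
        simp only [hk1, hk2, if_true, if_false]
        rw [show k + 1 - n = 0 by omega, hq0, ← hpn, show n = k + 1 by omega]
        exact hps k hk2
      · have hk3 : ¬ (k + 1 < n) := by omega
        simp only [hk2, hk3, if_false]
        rw [show k + 1 - n = (k - n) + 1 by omega]
        exact hqs (k - n) (by omega)

lemma avoidPath_single {W : Set (Sym2 V)} {u v : V} (h : G.Adj u v)
    (hW : s(u, v) ∉ W) : G.AvoidPath W u v := by
  refine ⟨1, fun k => if k = 0 then u else v, by simp, by simp, ?_⟩
  intro k hk
  have : k = 0 := by omega
  subst this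
  simpa using ⟨h, hW⟩

lemma exists_delta {W : Set (Sym2 V)} (hfin : W.Finite) (hsub : W ⊆ G.edgeSet) :
    ∃ δ > (0:ℝ), ∀ a b : V, s(a, b) ∈ W → δ ≤ G.R a b := by
  classical
  refine Set.Finite.induction_on_subset
    (motive := fun S _ => ∃ δ > (0:ℝ), ∀ a b : V, s(a, b) ∈ S → δ ≤ G.R a b) _ hfin
    ⟨1, one_pos, fun a b h => absurd h (Set.notMem_empty _)⟩ ?_
  rintro e S heW - - ⟨δ, hδpos, hδ⟩
  obtain ⟨c, d, hcd, rfl⟩ := hsub heW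
  refine ⟨min δ (G.R c d), lt_min hδpos (G.Rpos _ _ hcd), fun a b hab => ?_⟩
  rcases hab with hab | hab
  · rcases Sym2.eq_iff.1 hab with ⟨rfl, rfl⟩ | ⟨rfl, rfl⟩
    · exact le_trans (min_le_right _ _) le_rfl
    · rw [G.Rsymm]; exact min_le_right _ _
  · exact le_trans (min_le_left _ _) (hδ a b hab)

variable [MetricSpace V]

lemma pathLengths_nonneg {u v : V} {L : ℝ} (h : L ∈ G.pathLengths u v) : 0 ≤ L := by
  obtain ⟨n, p, -, -, hs, rfl⟩ := h
  exact Finset.sum_nonneg fun k hk => (G.Rpos _ _ (hs k (Finset.mem_range.1 hk))).le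

lemma pathLengths_bddBelow (u v : V) : BddBelow (G.pathLengths u v) :=
  ⟨0, fun _ hL => G.pathLengths_nonneg hL⟩

lemma dist_le_prefix (hmet : G.IsPathMetric) (p : ℕ → V) (n j : ℕ) (hj : j ≤ n)
    (hs : ∀ k < n, G.Adj (p k) (p (k + 1))) :
    dist (p 0) (p j) ≤ ∑ k ∈ Finset.range n, G.R (p k) (p (k + 1)) := by
  rw [hmet]
  refine le_trans (csInf_le (G.pathLengths_bddBelow _ _)
    ⟨j, p, rfl, rfl, fun k hk => hs k (by omega), rfl⟩) ?_
  exact Finset.sum_le_sum_of_subset_of_nonneg (Finset.range_subset_range.2 hj)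
    (fun k hk _ => (G.Rpos _ _ (hs k (Finset.mem_range.1 hk))).le)

lemma exists_short_avoid (hmet : G.IsPathMetric) (hconn : G.Connected)
    {W : Set (Sym2 V)} {δ : ℝ} (hδ : ∀ a b : V, s(a, b) ∈ W → δ ≤ G.R a b)
    {u v : V} (h : dist u v < δ) : G.AvoidPath W u v := by
  rw [hmet] at h
  obtain ⟨L, hL, hLδ⟩ := exists_lt_of_csInf_lt (hconn u v) h
  obtain ⟨n, p, h0, hn, hs, rfl⟩ := hL
  refine ⟨n, p, h0, hn, fun k hk => ⟨hs k hk, fun hmem => ?_⟩⟩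
  have h1 : δ ≤ G.R (p k) (p (k + 1)) := hδ _ _ hmem
  have h2 : G.R (p k) (p (k + 1)) ≤ ∑ i ∈ Finset.range n, G.R (p i) (p (i + 1)) :=
    Finset.single_le_sum (f := fun i => G.R (p i) (p (i + 1)))
      (fun i hi => (G.Rpos _ _ (hs i (Finset.mem_range.1 hi))).le) (Finset.mem_range.2 hk)
  linarith

end WGraph

/-- Cumulative block lengths for flattening a sequence of finite paths. -/
def flatT (L : ℕ → ℕ) : ℕ → ℕ
  | 0 => 0
  | n + 1 => flatT L n + L n + 1

lemma flatT_lt (L : ℕ → ℕ) (n : ℕ) : flatT L n < flatT L (n + 1) := by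
  simp only [flatT]; omega

lemma flatT_mono (L : ℕ → ℕ) : StrictMono (flatT L) :=
  strictMono_nat_of_lt_succ (flatT_lt L)

lemma flatT_ge (L : ℕ → ℕ) : ∀ n, n ≤ flatT L n := by
  intro n
  induction n with
  | zero => simp [flatT]
  | succ n ih => have := flatT_lt L n; omega

namespace WGraph

variable {V : Type*} (G : WGraph V) [MetricSpace V]

lemma flatten (x : Completion V) (W : Set (Sym2 V)) (c : ℕ → ℝ)
    (L : ℕ → ℕ) (P : ℕ → ℕ → V)
    (hlink : ∀ n, P n (L n) = P (n + 1) 0)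
    (hstep : ∀ n k, k < L n → G.Adj (P n k) (P n (k + 1)) ∧ s(P n k, P n (k + 1)) ∉ W)
    (hclose : ∀ n j, j ≤ L n → dist (↑(P n j) : Completion V) x < c n)
    (hc : Tendsto c atTop (nhds 0)) :
    ∃ q : ℕ → V, q 0 = P 0 0 ∧
      (∀ k, q k = q (k + 1) ∨ (G.Adj (q k) (q (k + 1)) ∧ s(q k, q (k + 1)) ∉ W)) ∧
      Tendsto (fun n => (↑(q n) : Completion V)) atTop (nhds x) := by
  have hex : ∀ m : ℕ, ∃ n, m < flatT L (n + 1) :=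
    fun m => ⟨m, lt_of_lt_of_le (Nat.lt_succ_self m) (flatT_ge L (m + 1))⟩
  set blk : ℕ → ℕ := fun m => Nat.find (hex m) with hblkdef
  have hblk2 : ∀ m, m < flatT L (blk m + 1) := fun m => Nat.find_spec (hex m)
  have hblk1 : ∀ m, flatT L (blk m) ≤ m := by
    intro m
    rcases Nat.eq_zero_or_pos (blk m) with h | h
    · rw [h]; simp [flatT]
    · have := Nat.find_min (hex m) (show blk m - 1 < blk m by omega)
      push_neg at this
      rwa [show blk m - 1 + 1 = blk m by omega] at this
  have hblkeq : ∀ n m, flatT L n ≤ m → m < flatT L (n + 1) → blk m = n := by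
    intro n m h1 h2
    refine le_antisymm (Nat.find_le h2) ?_
    by_contra h
    push_neg at h
    have : flatT L (blk m + 1) ≤ flatT L n := (flatT_mono L).monotone (by omega)
    have := hblk2 m
    omega
  set q : ℕ → V := fun m => P (blk m) (m - flatT L (blk m)) with hqdef
  have hq : ∀ n m, flatT L n ≤ m → m < flatT L (n + 1) → q m = P n (m - flatT L n) := by
    intro n m h1 h2
    simp only [hqdef, hblkeq n m h1 h2]
  refine ⟨q, ?_, ?_, ?_⟩
  · have := hq 0 0 (by simp [flatT]) (by have := flatT_lt L 0; omega)
    simpa [flatT] using this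
  · intro m
    have h1 := hblk1 m
    have h2 := hblk2 m
    set n := blk m with hn
    have hT1 : flatT L (n + 1) = flatT L n + L n + 1 := rfl
    by_cases hi : m - flatT L n < L n
    · right
      have e1 : q m = P n (m - flatT L n) := rfl
      have e2 : q (m + 1) = P n (m + 1 - flatT L n) := hq n (m + 1) (by omega) (by omega)
      rw [e1, e2, show m + 1 - flatT L n = (m - flatT L n) + 1 by omega]
      exact hstep n _ hi
    · left
      have him : m - flatT L n = L n := by omega
      have e2 : q (m + 1) = P (n + 1) (m + 1 - flatT L (n + 1)) :=
        hq (n + 1) (m + 1) (by omega) (by have := flatT_lt L (n + 1); simp only [flatT] at *; omega)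
      have e1 : q m = P n (L n) := by rw [show q m = P n (m - flatT L n) from rfl, him]
      rw [e1, e2, show m + 1 - flatT L (n + 1) = 0 by omega, hlink n]
  · have hd : ∀ m, dist (↑(q m) : Completion V) x < c (blk m) := by
      intro m
      have h1 := hblk1 m
      have h2 := hblk2 m
      have hT1 : flatT L (blk m + 1) = flatT L (blk m) + L (blk m) + 1 := rfl
      exact hclose (blk m) _ (by omega)
    have hblktop : Tendsto blk atTop atTop := by
      refine tendsto_atTop_atTop.2 fun N => ⟨flatT L N, fun m hm => ?_⟩
      by_contra h
      push_neg at h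
      have : flatT L (blk m + 1) ≤ flatT L N := (flatT_mono L).monotone (by omega)
      have := hblk2 m
      omega
    rw [tendsto_iff_dist_tendsto_zero]
    exact squeeze_zero (fun m => dist_nonneg) (fun m => (hd m).le) (hc.comp hblktop)


lemma exists_near (z : Completion V) {ε : ℝ} (hε : 0 < ε) :
    ∃ u : V, dist (↑u : Completion V) z < ε := by
  have h : z ∈ closure (Set.range ((↑) : V → Completion V)) := by
    rw [UniformSpace.Completion.denseRange_coe.closure_eq]; trivial
  obtain ⟨w, hw, hd⟩ := Metric.mem_closure_iff.1 h ε hε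
  obtain ⟨u, rfl⟩ := hw
  exact ⟨u, by rwa [dist_comm]⟩

lemma exists_tail (hmet : G.IsPathMetric) (hconn : G.Connected)
    {W : Set (Sym2 V)} {δ : ℝ} (hδpos : 0 < δ)
    (hδ : ∀ a b : V, s(a, b) ∈ W → δ ≤ G.R a b)
    (x : Completion V) (u₀ : V) (h₀ : dist (↑u₀ : Completion V) x < δ / 8) :
    ∃ q : ℕ → V, q 0 = u₀ ∧
      (∀ k, q k = q (k + 1) ∨ (G.Adj (q k) (q (k + 1)) ∧ s(q k, q (k + 1)) ∉ W)) ∧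
      Tendsto (fun n => (↑(q n) : Completion V)) atTop (nhds x) := by
  have hpow : ∀ n : ℕ, (0:ℝ) < δ / 2 ^ n := fun n => by positivity
  have hu : ∀ n : ℕ, ∃ u : V, dist (↑u : Completion V) x < δ / 2 ^ (n + 3) :=
    fun n => exists_near x (hpow (n + 3))
  choose u' hu' using hu
  set u : ℕ → V := fun n => if n = 0 then u₀ else u' n with hudef
  have hux : ∀ n, dist (↑(u n) : Completion V) x < δ / 2 ^ (n + 3) := by
    intro n
    rcases Nat.eq_zero_or_pos n with h | h
    · subst h
      simpa [u] using lt_of_lt_of_le h₀ (by norm_num)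
    · simp only [hudef, if_neg (by omega : ¬ n = 0)]
      exact hu' n
  have key : ∀ n : ℕ, ∃ (Ln : ℕ) (Pn : ℕ → V), Pn 0 = u n ∧ Pn Ln = u (n + 1) ∧
      (∀ k < Ln, G.Adj (Pn k) (Pn (k + 1)) ∧ s(Pn k, Pn (k + 1)) ∉ W) ∧
      ∀ j ≤ Ln, dist (↑(Pn j) : Completion V) x < δ / 2 ^ n := by
    intro n
    have e1 : δ / 2 ^ (n + 1) = δ / 2 ^ n / 2 := by
      rw [pow_succ]; ring
    have e2 : δ / 2 ^ (n + 2) = δ / 2 ^ n / 4 := by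
      rw [pow_succ, pow_succ]; ring
    have e3 : δ / 2 ^ (n + 3) = δ / 2 ^ n / 8 := by
      rw [pow_succ, pow_succ, pow_succ]; ring
    have e4 : δ / 2 ^ (n + 4) = δ / 2 ^ n / 16 := by
      rw [pow_succ, pow_succ, pow_succ, pow_succ]; ring
    have hpn := hpow n
    have hdist : dist (u n) (u (n + 1)) < δ / 2 ^ (n + 2) := by
      have h1 := hux n
      have h2 := hux (n + 1)
      have h3 : dist (↑(u n) : Completion V) ↑(u (n + 1)) ≤
          dist (↑(u n) : Completion V) x + dist (↑(u (n + 1)) : Completion V) x :=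
        dist_triangle_right _ _ _
      rw [UniformSpace.Completion.dist_eq] at h3
      rw [show n + 1 + 3 = n + 4 by omega] at h2
      calc dist (u n) (u (n + 1)) ≤ _ := h3
        _ < δ / 2 ^ (n + 3) + δ / 2 ^ (n + 4) := by linarith
        _ ≤ δ / 2 ^ (n + 2) := by rw [e2, e3, e4]; linarith
    rw [hmet] at hdist
    obtain ⟨Ltot, hmem, hlt⟩ := exists_lt_of_csInf_lt (hconn _ _) hdist
    obtain ⟨Ln, Pn, hP0, hPn, hPs, rfl⟩ := hmem
    refine ⟨Ln, Pn, hP0, hPn, fun k hk => ⟨hPs k hk, fun hmem2 => ?_⟩, fun j hj => ?_⟩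
    · have h1 : δ ≤ G.R (Pn k) (Pn (k + 1)) := hδ _ _ hmem2
      have h2 : G.R (Pn k) (Pn (k + 1)) ≤ ∑ i ∈ Finset.range Ln, G.R (Pn i) (Pn (i + 1)) :=
        Finset.single_le_sum (f := fun i => G.R (Pn i) (Pn (i + 1)))
          (fun i hi => (G.Rpos _ _ (hPs i (Finset.mem_range.1 hi))).le) (Finset.mem_range.2 hk)
      have hle : δ / 2 ^ n ≤ δ := div_le_self hδpos.le (one_le_pow₀ one_le_two)
      have h3 : δ / 2 ^ (n + 2) ≤ δ := by
        rw [e2]; linarith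
      linarith
    · have h1 : dist (Pn 0) (Pn j) ≤ ∑ i ∈ Finset.range Ln, G.R (Pn i) (Pn (i + 1)) :=
        G.dist_le_prefix hmet Pn Ln j hj hPs
    
      have h4 : dist (↑(Pn j) : Completion V) x ≤
          dist (↑(Pn j) : Completion V) ↑(Pn 0) + dist (↑(Pn 0) : Completion V) x :=
        dist_triangle _ _ _
      rw [UniformSpace.Completion.dist_eq, dist_comm (Pn j) (Pn 0)] at h4
      have h5 : dist (↑(Pn 0) : Completion V) x < δ / 2 ^ (n + 3) := by
        rw [hP0]; exact hux n
      calc dist (↑(Pn j) : Completion V) x ≤ _ := h4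
        _ < δ / 2 ^ (n + 2) + δ / 2 ^ (n + 3) := by linarith
        _ ≤ δ / 2 ^ n := by rw [e2, e3]; linarith
  choose L P hP0 hPL hPs hPc using key
  have hlink : ∀ n, P n (L n) = P (n + 1) 0 := fun n => by rw [hPL n, hP0 (n + 1)]
  have hctend : Tendsto (fun n : ℕ => δ / 2 ^ n) atTop (nhds 0) := by
    have h1 : Tendsto (fun n : ℕ => ((1:ℝ) / 2) ^ n) atTop (nhds 0) :=
      tendsto_pow_atTop_nhds_zero_of_lt_one (by norm_num) (by norm_num)
    have h2 := h1.const_mul δ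
    rw [mul_zero] at h2
    refine h2.congr fun n => ?_
    rw [div_pow, one_pow]
    ring
  obtain ⟨q, hq0, hqs, hqt⟩ := G.flatten x W (fun n => δ / 2 ^ n) L P hlink hPs hPc hctend
  refine ⟨q, ?_, hqs, hqt⟩
  rw [hq0, hP0 0]
  simp [hudef]


lemma separating (hmet : G.IsPathMetric) (hconn : G.Connected)
    (hw : G.WeaklyConnected) {x y : Completion V} (hxy : x ≠ y) :
    ∃ Φ : C(Completion V, ℝ), G.EventuallyFlat (fun v => Φ ↑v) ∧ Φ x ≠ Φ y := by
  classical
  obtain ⟨W, hWfin, hWsub, hWuse⟩ := hw x y hxy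
  obtain ⟨δ, hδpos, hδ⟩ := G.exists_delta hWfin hWsub
  obtain ⟨u₀, hu₀⟩ := exists_near (V := V) x (show (0:ℝ) < δ / 8 by positivity)
  obtain ⟨v₀, hv₀⟩ := exists_near (V := V) y (show (0:ℝ) < δ / 8 by positivity)
  set φ : V → ℝ := fun v => if G.AvoidPath W u₀ v then 1 else 0 with hφdef
  have hloc : ∀ a b : V, dist a b < δ → φ a = φ b := by
    intro a b hab
    have hp := G.exists_short_avoid hmet hconn hδ hab
    by_cases h : G.AvoidPath W u₀ a
    · simp only [hφdef]
      rw [if_pos h, if_pos (G.avoidPath_trans h hp)]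
    · have h2 : ¬ G.AvoidPath W u₀ b := fun hb => h (G.avoidPath_trans hb (G.avoidPath_symm hp))
      simp only [hφdef]
      rw [if_neg h, if_neg h2]
  have huc : UniformContinuous φ := by
    refine Metric.uniformContinuous_iff.2 fun ε hε => ⟨δ, hδpos, ?_⟩
    intro a b hab
    rw [Real.dist_eq, hloc _ _ hab, sub_self, abs_zero]
    exact hε
  set Φ : Completion V → ℝ := Completion.extension φ with hΦdef
  have hΦcont : Continuous Φ := Completion.continuous_extension
  have hΦcoe : ∀ v : V, Φ ↑v = φ v := fun v => Completion.extension_coe huc v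
  have hnear : ∀ (z : Completion V) (w : V), dist (↑w : Completion V) z < δ / 2 → Φ z = φ w := by
    intro z w hwz
    have hz : z ∈ closure (Set.range ((↑) : V → Completion V)) := by
      rw [UniformSpace.Completion.denseRange_coe.closure_eq]; trivial
    obtain ⟨f, hfmem, hf⟩ := mem_closure_iff_seq_limit.1 hz
    have h1 : Tendsto (fun n => Φ (f n)) atTop (nhds (Φ z)) := (hΦcont.tendsto z).comp hf
    have h3 : ∀ᶠ n in atTop, dist (f n) z < δ / 2 := by
      obtain ⟨N, hN⟩ := Metric.tendsto_atTop.1 hf (δ / 2) (by positivity)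
      exact eventually_atTop.2 ⟨N, fun n hn => hN n hn⟩
    have h2 : ∀ᶠ n in atTop, Φ (f n) = φ w := by
      filter_upwards [h3] with n hn
      obtain ⟨g, hg⟩ := hfmem n
      have hd : dist g w < δ := by
        rw [← UniformSpace.Completion.dist_eq]
        calc dist (↑g : Completion V) ↑w
            ≤ dist (↑g : Completion V) z + dist (↑w : Completion V) z :=
              dist_triangle_right _ _ _
          _ < δ / 2 + δ / 2 := by rw [hg]; exact add_lt_add hn hwz
          _ = δ := by ring
      rw [← hg, hΦcoe g, hloc g w hd]
    have h4 : Tendsto (fun n => Φ (f n)) atTop (nhds (φ w)) :=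
      Tendsto.congr' (by filter_upwards [h2] with n hn; exact hn.symm) tendsto_const_nhds
    exact tendsto_nhds_unique h1 h4
  have hδ82 : δ / 8 < δ / 2 := by linarith
  have hx1 : Φ x = 1 := by
    rw [hnear x u₀ (lt_trans hu₀ hδ82)]
    simp only [hφdef]
    rw [if_pos (G.avoidPath_refl W u₀)]
  refine ⟨⟨Φ, hΦcont⟩, ?_, ?_⟩
  · have hfib : ∀ e ∈ W, {q : V × V | s(q.1, q.2) = e}.Finite := by
      intro e _
      induction e using Sym2.ind with
      | _ a b =>
        refine Set.Finite.subset ((Set.finite_singleton ((a, b) : V × V)).insert (b, a)) ?_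
        intro q hq
        simp only [Set.mem_insert_iff, Set.mem_singleton_iff, Prod.ext_iff]
        rcases Sym2.eq_iff.1 hq with ⟨h1, h2⟩ | ⟨h1, h2⟩
        · exact Or.inr ⟨h1, h2⟩
        · exact Or.inl ⟨h1, h2⟩
    have hWpairs : {p : V × V | s(p.1, p.2) ∈ W}.Finite := by
      have hsub2 : {p : V × V | s(p.1, p.2) ∈ W} ⊆
          ⋃ e ∈ W, {q : V × V | s(q.1, q.2) = e} :=
        fun p hp => Set.mem_biUnion hp rfl
      exact (Set.Finite.biUnion hWfin hfib).subset hsub2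
    refine hWpairs.subset fun p hp => ?_
    obtain ⟨hadj, hneq⟩ := hp
    show s(p.1, p.2) ∈ W
    by_contra hsW
    apply hneq
    show Φ ↑p.1 = Φ ↑p.2
    rw [hΦcoe, hΦcoe]
    have hstep1 := G.avoidPath_single hadj hsW
    by_cases h : G.AvoidPath W u₀ p.1
    · simp only [hφdef]
      rw [if_pos h, if_pos (G.avoidPath_trans h hstep1)]
    · have h2 : ¬ G.AvoidPath W u₀ p.2 :=
        fun hb => h (G.avoidPath_trans hb (G.avoidPath_symm hstep1))
      simp only [hφdef]
      rw [if_neg h, if_neg h2]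
  · intro heq
    have heq' : Φ x = Φ y := heq
    have hyv : Φ y = φ v₀ := hnear y v₀ (lt_trans hv₀ hδ82)
    have hv1 : φ v₀ = 1 := by rw [← hyv, ← heq', hx1]
    have hmid : G.AvoidPath W u₀ v₀ := by
      by_contra h
      simp only [hφdef] at hv1
      rw [if_neg h] at hv1
      norm_num at hv1
    obtain ⟨M, mid, hm0, hmM, hms⟩ := hmid
    obtain ⟨qx, hqx0, hqxs, hqxt⟩ := G.exists_tail hmet hconn hδpos hδ x u₀ hu₀
    obtain ⟨qy, hqy0, hqys, hqyt⟩ := G.exists_tail hmet hconn hδpos hδ y v₀ hv₀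
    set p : ℤ → V := fun k => if k ≤ -(M:ℤ) then qx (-(k + M)).toNat
      else if k ≤ 0 then mid (k + M).toNat else qy k.toNat with hpdef
    have hA : ∀ j : ℕ, p (-(M:ℤ) - j) = qx j := by
      intro j
      have hcond : (-(M:ℤ) - j) ≤ -(M:ℤ) := by omega
      simp only [hpdef, if_pos hcond]
      congr 1
      omega
    have hB : ∀ i : ℕ, i ≤ M → p ((i:ℤ) - M) = mid i := by
      intro i hi
      rcases Nat.eq_zero_or_pos i with h | h
      · subst h
        have hcond : (((0:ℕ):ℤ) - M) ≤ -(M:ℤ) := by omega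
        simp only [hpdef, if_pos hcond]
        rw [show (-(((0:ℕ):ℤ) - M + M)).toNat = 0 by omega, hqx0, hm0]
      · have hc1 : ¬ (((i:ℕ):ℤ) - M ≤ -(M:ℤ)) := by omega
        have hc2 : ((i:ℕ):ℤ) - M ≤ 0 := by omega
        simp only [hpdef, if_neg hc1, if_pos hc2]
        congr 1
        omega
    have hC : ∀ j : ℕ, p (j:ℤ) = qy j := by
      intro j
      rcases Nat.eq_zero_or_pos j with h | h
      · subst h
        have h1 := hB M le_rfl
        rw [show ((M:ℤ) - M) = ((0:ℕ):ℤ) by omega] at h1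
        rw [h1, hmM, hqy0]
      · have hc1 : ¬ ((j:ℤ) ≤ -(M:ℤ)) := by omega
        have hc2 : ¬ ((j:ℤ) ≤ 0) := by omega
        simp only [hpdef, if_neg hc1, if_neg hc2, Int.toNat_natCast]
    have hstep : ∀ k : ℤ, p k = p (k + 1) ∨
        (G.Adj (p k) (p (k + 1)) ∧ s(p k, p (k + 1)) ∉ W) := by
      intro k
      rcases lt_trichotomy k (-(M:ℤ)) with hk | hk | hk
      · set j : ℕ := (-(k + M)).toNat with hj
        have hj1 : 1 ≤ j := by omega
        have e1 : p k = qx j := by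
          rw [show k = -(M:ℤ) - j by omega]; exact hA j
        have e2 : p (k + 1) = qx (j - 1) := by
          rw [show k + 1 = -(M:ℤ) - ((j - 1 : ℕ) : ℤ) by omega]; exact hA (j - 1)
        have hj2 : (j - 1) + 1 = j := by omega
        rw [e1, e2]
        rcases hqxs (j - 1) with h | h
        · left; rw [hj2] at h; exact h.symm
        · right
          rw [hj2] at h
          exact ⟨G.symm _ _ h.1, by rw [Sym2.eq_swap]; exact h.2⟩
      · rcases Nat.eq_zero_or_pos M with hM | hM
        · have e1 : p k = qy 0 := by
            rw [show k = ((0:ℕ):ℤ) by omega]; exact hC 0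
          have e2 : p (k + 1) = qy 1 := by
            rw [show k + 1 = ((1:ℕ):ℤ) by omega]; exact hC 1
          rw [e1, e2]
          exact hqys 0
        · have e1 : p k = mid 0 := by
            rw [show k = ((0:ℕ):ℤ) - M by omega]; exact hB 0 (by omega)
          have e2 : p (k + 1) = mid 1 := by
            rw [show k + 1 = ((1:ℕ):ℤ) - M by omega]; exact hB 1 (by omega)
          rw [e1, e2]
          right
          exact hms 0 (by omega)
      · rcases le_or_gt 0 k with hk0 | hk0
        · obtain ⟨j, rfl⟩ := Int.eq_ofNat_of_zero_le hk0
          have e1 : p (j:ℤ) = qy j := hC j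
          have e2 : p ((j:ℤ) + 1) = qy (j + 1) := by
            rw [show (j:ℤ) + 1 = ((j + 1 : ℕ) : ℤ) by omega]; exact hC (j + 1)
          rw [e1, e2]
          exact hqys j
        · set i : ℕ := (k + M).toNat with hi
          have hiM : i < M := by omega
          have e1 : p k = mid i := by
            rw [show k = (i:ℤ) - M by omega]; exact hB i (by omega)
          have e2 : p (k + 1) = mid (i + 1) := by
            rw [show k + 1 = ((i + 1 : ℕ) : ℤ) - M by omega]; exact hB (i + 1) (by omega)
          rw [e1, e2]
          right
          exact hms i hiM
    have htl : Tendsto (fun n : ℕ => (↑(p (-(n:ℤ))) : Completion V)) atTop (nhds x) := by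
      have hshift : Tendsto (fun n : ℕ => (↑(qx (n - M)) : Completion V)) atTop (nhds x) :=
        hqxt.comp (tendsto_sub_atTop_nat M)
      refine Tendsto.congr' ?_ hshift
      filter_upwards [eventually_ge_atTop M] with n hn
      congr 1
      rw [show -(n:ℤ) = -(M:ℤ) - ((n - M : ℕ) : ℤ) by omega, hA]
    have htr : Tendsto (fun n : ℕ => (↑(p (n:ℤ)) : Completion V)) atTop (nhds y) :=
      hqyt.congr fun n => by rw [hC n]
    let γ : G.CPath x y := ⟨p, fun k => (hstep k).imp id And.left, htl, htr⟩
    obtain ⟨e, heW, k, hne, hedge⟩ := hWuse γ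
    rcases hstep k with h | h
    · exact hne h
    · exact h.2 (hedge ▸ heW)


end WGraph

/-- if the completion is weakly connected and compact, the
eventually flat functions are uniformly dense in the continuous functions. -/
theorem eventuallyFlat_dense {V : Type*} [MetricSpace V] [Countable V]
    (G : WGraph V) (hmet : G.IsPathMetric) (hconn : G.Connected)
    (hw : G.WeaklyConnected) [CompactSpace (UniformSpace.Completion V)]
    (F : UniformSpace.Completion V → ℝ) (hF : Continuous F) :
    ∀ ε > (0 : ℝ), ∃ (φ : V → ℝ) (Φ : UniformSpace.Completion V → ℝ),
      G.EventuallyFlat φ ∧ Continuous Φ ∧ (∀ v : V, Φ ↑v = φ v) ∧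
      ∀ x, |F x - Φ x| ≤ ε := by
  classical
  intro ε hε
  have hconst : ∀ c : ℝ, G.EventuallyFlat (fun _ : V => c) := by
    intro c
    refine Set.Finite.subset (Set.finite_empty) ?_
    intro p hp
    exact absurd rfl hp.2
  have hcomb : ∀ (φ ψ : V → ℝ) (op : ℝ → ℝ → ℝ), G.EventuallyFlat φ → G.EventuallyFlat ψ →
      G.EventuallyFlat (fun v => op (φ v) (ψ v)) := by
    intro φ ψ op h1 h2
    refine (h1.union h2).subset ?_
    intro p hp
    obtain ⟨hadj, hne⟩ := hp
    by_cases hφ : φ p.1 = φ p.2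
    · right; exact ⟨hadj, fun hψ => hne (by simp only []; rw [hφ, hψ])⟩
    · left; exact ⟨hadj, hφ⟩
  let A : Subalgebra ℝ C(Completion V, ℝ) :=
  { carrier := {Φ : C(Completion V, ℝ) | G.EventuallyFlat fun v => Φ ↑v}
    add_mem' := fun {f g} hf hg => by
      have hf' : G.EventuallyFlat (fun v => f ↑v) := hf
      have hg' : G.EventuallyFlat (fun v => g ↑v) := hg
      have h := hcomb _ _ (· + ·) hf' hg'
      show G.EventuallyFlat fun v => (f + g) ↑v
      have he : (fun v : V => (f + g) ↑v) = fun v : V => f ↑v + g ↑v := by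
        funext v; simp
      rw [he]; exact h
    mul_mem' := fun {f g} hf hg => by
      have hf' : G.EventuallyFlat (fun v => f ↑v) := hf
      have hg' : G.EventuallyFlat (fun v => g ↑v) := hg
      have h := hcomb _ _ (· * ·) hf' hg'
      show G.EventuallyFlat fun v => (f * g) ↑v
      have he : (fun v : V => (f * g) ↑v) = fun v : V => f ↑v * g ↑v := by
        funext v; simp
      rw [he]; exact h
    zero_mem' := by
      show G.EventuallyFlat fun v => (0 : C(Completion V, ℝ)) ↑v
      have he : (fun v : V => (0 : C(Completion V, ℝ)) ↑v) = fun _ : V => (0:ℝ) := by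
        funext v; simp
      rw [he]; exact hconst 0
    one_mem' := by
      show G.EventuallyFlat fun v => (1 : C(Completion V, ℝ)) ↑v
      have he : (fun v : V => (1 : C(Completion V, ℝ)) ↑v) = fun _ : V => (1:ℝ) := by
        funext v; simp
      rw [he]; exact hconst 1
    algebraMap_mem' := fun r => by
      show G.EventuallyFlat fun v => (algebraMap ℝ C(Completion V, ℝ) r) ↑v
      have he : (fun v : V => (algebraMap ℝ C(Completion V, ℝ) r) ↑v) = fun _ : V => r := by
        funext v; simp [Algebra.algebraMap_eq_smul_one]
      rw [he]; exact hconst r }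
  have hsep : A.SeparatesPoints := by
    intro x y hxy
    obtain ⟨Φ, hflat, hne⟩ := G.separating hmet hconn hw hxy
    exact ⟨Φ, ⟨Φ, hflat, rfl⟩, hne⟩
  have htop := ContinuousMap.subalgebra_topologicalClosure_eq_top_of_separatesPoints A hsep
  have hFcl : (ContinuousMap.mk F hF) ∈ closure (A : Set C(Completion V, ℝ)) := by
    have : (ContinuousMap.mk F hF) ∈ A.topologicalClosure := by rw [htop]; trivial
    exact this
  obtain ⟨Φ0, hΦ0A, hdist⟩ := Metric.mem_closure_iff.1 hFcl ε hε
  refine ⟨fun v => Φ0 ↑v, ⇑Φ0, hΦ0A, Φ0.continuous, fun v => rfl, fun z => ?_⟩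
  have h1 : dist ((ContinuousMap.mk F hF) z) (Φ0 z) ≤ dist (ContinuousMap.mk F hF) Φ0 :=
    ContinuousMap.dist_apply_le_dist z
  rw [Real.dist_eq] at h1
  exact le_trans h1 hdist.le
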